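/- The following are equivalent: (i) for every x ∈ X the stabilizer G_x is closed in G; (ii) τ(X,G) is T1; (iii) τ(X,G) is Hausdorff. -/

import Mathlib

open TopologicalSpace

section Aux
variable {G X : Type*} [Group G] [TopologicalSpace G] [IsTopologicalGroup G] [MulAction G X]

private def tauB (G X : Type*) [Group G] [TopologicalSpace G] [MulAction G X] : Set (Set X) :=
  {s : Set X | ∃ (U : Set G) (x : X), IsOpen U ∧ s = (· • x) '' U}

private lemma cont_orbit (x : X) :
    @Continuous G X _ (generateFrom (tauB G X)) (fun u : G => u • x) := by
  rw [continuous_generateFrom_iff]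
  rintro s ⟨V, z, hV, rfl⟩
  rw [isOpen_iff_forall_mem_open]
  intro u hu
  obtain ⟨v, hv, hvz⟩ := hu
  refine ⟨(· * (v⁻¹ * u)) '' V, ?_, (isOpenMap_mul_right _) V hV, ⟨v, hv, by group⟩⟩
  rintro w ⟨w', hw', rfl⟩
  refine ⟨w', hw', ?_⟩
  have hvz' : v • z = u • x := hvz
  show w' • z = (w' * (v⁻¹ * u)) • x
  have : (w' * (v⁻¹ * u)) • x = w' • (v⁻¹ • (u • x)) := by
    rw [← mul_smul, ← mul_smul, mul_assoc]
  rw [this, ← hvz', inv_smul_smul]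

private lemma stab_closed_of_t1
    (h : @T1Space X (generateFrom (tauB G X))) (x : X) :
    IsClosed (MulAction.stabilizer G x : Set G) := by
  letI : TopologicalSpace X := generateFrom (tauB G X)
  have h1 : (MulAction.stabilizer G x : Set G) = (fun u : G => u • x) ⁻¹' {x} := by
    ext u; simp [MulAction.mem_stabilizer_iff]
  rw [h1]
  exact IsClosed.preimage (cont_orbit x) (@isClosed_singleton X _ h x)

private lemma t2_of_stab_closed
    (h : ∀ x : X, IsClosed (MulAction.stabilizer G x : Set G)) :
    @T2Space X (generateFrom (tauB G X)) := by
  letI : TopologicalSpace X := generateFrom (tauB G X)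
  constructor
  intro y z hyz
  by_cases hz : ∃ g : G, g • y = z
  · obtain ⟨g, rfl⟩ := hz
    have hg : g ∉ MulAction.stabilizer G y := by
      intro hg
      exact hyz (by rw [MulAction.mem_stabilizer_iff.mp hg])
    have hc : IsOpen ((MulAction.stabilizer G y : Set G)ᶜ) := (h y).isOpen_compl
    have hcont : Continuous (fun p : G × G => p.1⁻¹ * p.2 * g) := by continuity
    have hmem : (fun p : G × G => p.1⁻¹ * p.2 * g) ⁻¹' ((MulAction.stabilizer G y : Set G)ᶜ)
        ∈ nhds ((1 : G), (1 : G)) := by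
      apply hcont.continuousAt.preimage_mem_nhds
      apply hc.mem_nhds
      simpa using hg
    obtain ⟨U, V, hU, h1U, hV, h1V, hUV⟩ := mem_nhds_prod_iff'.mp hmem
    refine ⟨(· • y) '' U, (· • (g • y)) '' V,
      isOpen_generateFrom_of_mem ⟨U, y, hU, rfl⟩,
      isOpen_generateFrom_of_mem ⟨V, g • y, hV, rfl⟩,
      ⟨1, h1U, one_smul _ _⟩, ⟨1, h1V, one_smul _ _⟩, ?_⟩
    rw [Set.disjoint_left]
    rintro a ⟨u, hu, rfl⟩ ⟨v, hv, hvu⟩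
    have hvu' : v • (g • y) = u • y := hvu
    have hx : (u⁻¹ * v * g) • y = y := by
      have : (u⁻¹ * (v * g)) • y = u⁻¹ • (v • (g • y)) := by
        rw [← mul_smul, ← mul_smul, mul_assoc]
      rw [mul_assoc, this, hvu', ← mul_smul, inv_mul_cancel, one_smul]
    exact hUV (Set.mk_mem_prod hu hv) hx
  · refine ⟨(· • y) '' Set.univ, (· • z) '' Set.univ,
      isOpen_generateFrom_of_mem ⟨Set.univ, y, isOpen_univ, rfl⟩,
      isOpen_generateFrom_of_mem ⟨Set.univ, z, isOpen_univ, rfl⟩,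
      ⟨1, trivial, one_smul _ _⟩, ⟨1, trivial, one_smul _ _⟩, ?_⟩
    rw [Set.disjoint_left]
    rintro a ⟨u, -, rfl⟩ ⟨v, -, hvu⟩
    have hvu' : v • z = u • y := hvu
    exact hz ⟨v⁻¹ * u, by rw [mul_smul, ← hvu', ← mul_smul, inv_mul_cancel, one_smul]⟩

end Aux

theorem tau_t1_iff_hausdorff_iff_stabilizers_closed {G X : Type*} [Group G] [TopologicalSpace G]
    [IsTopologicalGroup G] [MulAction G X] :
    letI : TopologicalSpace X :=
      generateFrom {s : Set X | ∃ (U : Set G) (x : X), IsOpen U ∧ s = (· • x) '' U}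
    ((∀ x : X, IsClosed (MulAction.stabilizer G x : Set G)) ↔ T1Space X) ∧
      (T1Space X ↔ T2Space X) := by
  letI : TopologicalSpace X := generateFrom (tauB G X)
  refine ⟨⟨fun h => @T2Space.t1Space X _ (t2_of_stab_closed h),
    fun h => stab_closed_of_t1 h⟩,
    ⟨fun h => t2_of_stab_closed (stab_closed_of_t1 h),
    fun h => @T2Space.t1Space X _ h⟩⟩
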